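/- Let (P, L) be an intersecting r-uniform linear system with r ≥ 2 an even integer. If ν₂ = r + 1, then τ = (r + 2)/2. -/

import Mathlib

open Finset

variable {P : Type*} [Fintype P] [DecidableEq P]

/-- `T` is a transversal of the set system `L`: it meets every member of `L`. -/
def IsTransversal (L : Finset (Finset P)) (T : Finset P) : Prop :=
  ∀ ℓ ∈ L, (T ∩ ℓ).Nonempty

/-- The transversal number τ: minimum size of a transversal. -/
noncomputable def tau (L : Finset (Finset P)) : ℕ :=
  sInf {n | ∃ T : Finset P, T.card = n ∧ IsTransversal L T}

/-- `M` is a matching of `L`: a pairwise disjoint subfamily. -/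
def IsMatching (L M : Finset (Finset P)) : Prop :=
  M ⊆ L ∧ ∀ a ∈ M, ∀ b ∈ M, a ≠ b → a ∩ b = ∅

/-- The matching number ν: maximum size of a matching. -/
noncomputable def matchingNumber (L : Finset (Finset P)) : ℕ :=
  sSup {n | ∃ M : Finset (Finset P), IsMatching L M ∧ M.card = n}

/-- `R` is a 2-packing of `L`: no three distinct members share a common point. -/
def IsTwoPacking (L R : Finset (Finset P)) : Prop :=
  R ⊆ L ∧ ∀ a ∈ R, ∀ b ∈ R, ∀ c ∈ R, a ≠ b → a ≠ c → b ≠ c → a ∩ b ∩ c = ∅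

/-- The 2-packing number ν₂. -/
noncomputable def nu2 (L : Finset (Finset P)) : ℕ :=
  sSup {n | ∃ R : Finset (Finset P), IsTwoPacking L R ∧ R.card = n}

/-- A linear system: two distinct lines share at most one point. -/
def Linear (L : Finset (Finset P)) : Prop :=
  ∀ a ∈ L, ∀ b ∈ L, a ≠ b → (a ∩ b).card ≤ 1

/-- Intersecting: every two lines meet. -/
def Intersecting (L : Finset (Finset P)) : Prop :=
  ∀ a ∈ L, ∀ b ∈ L, (a ∩ b).Nonempty

/-- `r`-uniform: every line has exactly `r` points. -/
def Uniform (L : Finset (Finset P)) (r : ℕ) : Prop :=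
  ∀ ℓ ∈ L, ℓ.card = r

/-- `r`-partite: the points partition into `r` sides, each meeting every line exactly once. -/
def Partite (L : Finset (Finset P)) (r : ℕ) : Prop :=
  ∃ X : Fin r → Finset P, (∀ p : P, ∃! i, p ∈ X i) ∧
    ∀ ℓ ∈ L, ∀ i, (ℓ ∩ X i).card = 1

/-- The degree of a point: the number of lines through it. -/
def deg (L : Finset (Finset P)) (p : P) : ℕ :=
  (L.filter (fun ℓ => p ∈ ℓ)).card

lemma even_card_of_invol {α : Type*} [DecidableEq α] :
    ∀ (n : ℕ) (s : Finset α), s.card = n → ∀ f : α → α,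
    (∀ x ∈ s, f x ∈ s) → (∀ x ∈ s, f x ≠ x) → (∀ x ∈ s, f (f x) = x) →
    Even s.card := by
  intro n
  induction n using Nat.strong_induction_on with
  | _ n ih =>
    intro s hcard f hmem hne hinv
    rcases s.eq_empty_or_nonempty with rfl | ⟨a, ha⟩
    · simp
    · have hfa := hmem a ha
      have hane := hne a ha
      have hfas : f a ∈ s.erase a := mem_erase.2 ⟨hane, hfa⟩
      have hce : (s.erase a).card = s.card - 1 := card_erase_of_mem ha
      have hpos : 0 < (s.erase a).card := card_pos.2 ⟨f a, hfas⟩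
      have h2 : 2 ≤ s.card := by omega
      set s' := (s.erase a).erase (f a) with hs'
      have hmem' : ∀ x, x ∈ s' ↔ x ≠ f a ∧ x ≠ a ∧ x ∈ s := by
        intro x; simp [hs', mem_erase, and_assoc]
      have hcard' : s'.card = s.card - 2 := by
        rw [hs', card_erase_of_mem hfas, hce]
        omega
      have hsub : ∀ x ∈ s', x ∈ s := fun x hx => ((hmem' x).1 hx).2.2
      have hm : ∀ x ∈ s', f x ∈ s' := by
        intro x hx
        obtain ⟨hx1, hx2, hx3⟩ := (hmem' x).1 hx
        refine (hmem' (f x)).2 ⟨?_, ?_, hmem x hx3⟩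
        · intro h; exact hx2 (by rw [← hinv x hx3, h, hinv a ha])
        · intro h; exact hx1 (by rw [← hinv x hx3, h])
      have hev : Even s'.card :=
        ih (s.card - 2) (by omega) s' hcard' f hm
          (fun x hx => hne x (hsub x hx)) (fun x hx => hinv x (hsub x hx))
      obtain ⟨k, hk⟩ := hev
      exact ⟨k + 1, by omega⟩

lemma exists_small_transversal {P : Type*} [Fintype P] [DecidableEq P] :
    ∀ (n : ℕ) (S : Finset (Finset P)), S.card = n →
    (∀ a ∈ S, ∀ b ∈ S, (a ∩ b).Nonempty) →
    ∃ T : Finset P, IsTransversal S T ∧ T.card ≤ (S.card + 1) / 2 := by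
  intro n
  induction n using Nat.strong_induction_on with
  | _ n ih =>
    intro S hcard hS
    rcases S.eq_empty_or_nonempty with rfl | ⟨a, ha⟩
    · exact ⟨∅, fun ℓ hℓ => absurd hℓ (notMem_empty ℓ), by simp⟩
    · by_cases h1 : S.card ≤ 1
      · -- S = {a}
        obtain ⟨p, hp⟩ := hS a ha a ha
        have h0 : 1 ≤ S.card := card_pos.2 ⟨a, ha⟩
        refine ⟨{p}, ?_, by simp only [card_singleton]; omega⟩
        intro ℓ hℓ
        have : ℓ = a := by
          have := card_le_one.1 h1 ℓ hℓ a ha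
          exact this
        subst this
        exact ⟨p, mem_inter.2 ⟨mem_singleton_self p, (mem_inter.1 hp).1⟩⟩
      · obtain ⟨b, hb, hba⟩ := (one_lt_card_iff_nontrivial (s := S)).1 (by omega) |>.exists_ne a
        obtain ⟨p, hp⟩ := hS a ha b hb
        set S' := (S.erase a).erase b with hS'
        have hbe : b ∈ S.erase a := mem_erase.2 ⟨hba, hb⟩
        have hcard' : S'.card = S.card - 2 := by
          rw [hS', card_erase_of_mem hbe, card_erase_of_mem ha]
          omega
        have hsub : S' ⊆ S := (erase_subset _ _).trans (erase_subset _ _)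
        obtain ⟨T', hT', hT'c⟩ := ih (S.card - 2) (by omega) S' hcard'
          (fun x hx y hy => hS x (hsub hx) y (hsub hy))
        refine ⟨insert p T', ?_, ?_⟩
        · intro ℓ hℓ
          by_cases hℓa : ℓ = a
          · exact ⟨p, mem_inter.2 ⟨mem_insert_self p T', hℓa ▸ (mem_inter.1 hp).1⟩⟩
          by_cases hℓb : ℓ = b
          · exact ⟨p, mem_inter.2 ⟨mem_insert_self p T', hℓb ▸ (mem_inter.1 hp).2⟩⟩
          · obtain ⟨q, hq⟩ := hT' ℓ (by rw [hS']; exact mem_erase.2 ⟨hℓb, mem_erase.2 ⟨hℓa, hℓ⟩⟩)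
            exact ⟨q, mem_inter.2 ⟨mem_insert_of_mem (mem_inter.1 hq).1, (mem_inter.1 hq).2⟩⟩
        · calc (insert p T').card ≤ T'.card + 1 := card_insert_le p T'
            _ ≤ (S.card + 1) / 2 := by rw [hcard'] at hT'c; omega

theorem stmt6 (r : ℕ) (hr : 2 ≤ r) (heven : Even r) (L : Finset (Finset P))
    (hlin : Linear L) (hint : Intersecting L) (hunif : Uniform L r)
    (hnu2 : nu2 L = r + 1) :
    tau L = (r + 2) / 2 := by
  classical
  -- extract a 2-packing of size r+1
  have hbdd : BddAbove {n | ∃ R : Finset (Finset P), IsTwoPacking L R ∧ R.card = n} := by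
    refine ⟨L.card, ?_⟩
    rintro n ⟨R, ⟨hRL, _⟩, rfl⟩
    exact card_le_card hRL
  have hne0 : ({n | ∃ R : Finset (Finset P), IsTwoPacking L R ∧ R.card = n}).Nonempty :=
    ⟨0, ∅, ⟨empty_subset _, by simp⟩, rfl⟩
  have hmem : r + 1 ∈ {n | ∃ R : Finset (Finset P), IsTwoPacking L R ∧ R.card = n} := by
    rw [← hnu2]
    exact Nat.sSup_mem hne0 hbdd
  obtain ⟨R, ⟨hRL, hR3⟩, hRcard⟩ := hmem
  -- pairwise intersections are single points
  have hcard1 : ∀ a ∈ L, ∀ b ∈ L, a ≠ b → (a ∩ b).card = 1 := by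
    intro a ha b hb hab
    have h1 := hlin a ha b hb hab
    have h2 : 0 < (a ∩ b).card := card_pos.2 (hint a ha b hb)
    omega
  -- every point of a line of R lies on another line of R
  have factB : ∀ a ∈ R, ∀ x ∈ a, ∃ b ∈ R, b ≠ a ∧ x ∈ b := by
    intro a haR x hx
    set f : ∀ b ∈ R.erase a, P := fun b _ =>
      if h : (a ∩ b).Nonempty then h.choose else x with hf
    have hmaps : ∀ b hb, f b hb ∈ a := by
      intro b hb
      have hbR := mem_of_mem_erase hb
      have h : (a ∩ b).Nonempty := hint a (hRL haR) b (hRL hbR)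
      simp only [hf, dif_pos h]
      exact (mem_inter.1 h.choose_spec).1
    have hinj : ∀ b c hb hc, f b hb = f c hc → b = c := by
      intro b c hb hc hbc
      by_contra hne'
      have hbR := mem_of_mem_erase hb
      have hcR := mem_of_mem_erase hc
      have h1 : (a ∩ b).Nonempty := hint a (hRL haR) b (hRL hbR)
      have h2 : (a ∩ c).Nonempty := hint a (hRL haR) c (hRL hcR)
      have hb1 : f b hb ∈ a ∩ b := by simp only [hf, dif_pos h1]; exact h1.choose_spec
      have hc1 : f c hc ∈ a ∩ c := by simp only [hf, dif_pos h2]; exact h2.choose_spec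
      have h3 := hR3 a haR b hbR c hcR
        (Ne.symm (mem_erase.1 hb).1) (Ne.symm (mem_erase.1 hc).1) hne'
      have : f b hb ∈ a ∩ b ∩ c := by
        rw [mem_inter]
        exact ⟨hb1, by rw [hbc]; exact (mem_inter.1 hc1).2⟩
      rw [h3] at this
      exact absurd this (notMem_empty _)
    have hcards : a.card ≤ (R.erase a).card := by
      rw [card_erase_of_mem haR, hRcard, hunif a (hRL haR)]
      omega
    obtain ⟨b, hb, hxb⟩ := surj_on_of_inj_on_of_card_le f hmaps hinj hcards x hx
    have hbR := mem_of_mem_erase hb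
    have h : (a ∩ b).Nonempty := hint a (hRL haR) b (hRL hbR)
    refine ⟨b, hbR, (mem_erase.1 hb).1, ?_⟩
    have : x = h.choose := by rw [hxb]; simp only [hf, dif_pos h]
    rw [this]
    exact (mem_inter.1 h.choose_spec).2
  -- L = R
  have hLR : L ⊆ R := by
    intro ℓ hℓ
    by_contra hℓR
    have hℓne : ∀ a ∈ R, ℓ ≠ a := fun a ha h => hℓR (h ▸ ha)
    have hℓpos : ℓ.Nonempty := by
      rw [← card_pos, hunif ℓ hℓ]; omega
    obtain ⟨p0, hp0⟩ := hℓpos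
    set χ : Finset P → P := fun a => if h : (ℓ ∩ a).Nonempty then h.choose else p0 with hχ
    have hχmem : ∀ a ∈ R, χ a ∈ ℓ ∩ a := by
      intro a ha
      have h : (ℓ ∩ a).Nonempty := hint ℓ hℓ a (hRL ha)
      simp only [hχ, dif_pos h]
      exact h.choose_spec
    have hχuniq : ∀ a ∈ R, ∀ y, y ∈ ℓ ∩ a → y = χ a := by
      intro a ha y hy
      have h1 : (ℓ ∩ a).card ≤ 1 := hlin ℓ hℓ a (hRL ha) (hℓne a ha)
      exact card_le_one.1 h1 y hy (χ a) (hχmem a ha)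
    set σ : Finset P → Finset P := fun a =>
      if h : ∃ b, b ∈ R ∧ b ≠ a ∧ χ a ∈ b then h.choose else a with hσ
    have hσspec : ∀ a ∈ R, σ a ∈ R ∧ σ a ≠ a ∧ χ a ∈ σ a := by
      intro a ha
      have hx : χ a ∈ a := (mem_inter.1 (hχmem a ha)).2
      obtain ⟨b, hbR, hba, hxb⟩ := factB a ha (χ a) hx
      have h : ∃ b, b ∈ R ∧ b ≠ a ∧ χ a ∈ b := ⟨b, hbR, hba, hxb⟩
      simp only [hσ, dif_pos h]
      exact h.choose_spec
    have hχσ : ∀ a ∈ R, χ (σ a) = χ a := by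
      intro a ha
      obtain ⟨hb1, hb2, hb3⟩ := hσspec a ha
      exact (hχuniq (σ a) hb1 (χ a)
        (mem_inter.2 ⟨(mem_inter.1 (hχmem a ha)).1, hb3⟩)).symm
    have hinv : ∀ a ∈ R, σ (σ a) = a := by
      intro a ha
      obtain ⟨hb1, hb2, hb3⟩ := hσspec a ha
      obtain ⟨hc1, hc2, hc3⟩ := hσspec (σ a) hb1
      by_contra hne'
      -- a, σ a, σ (σ a) pairwise distinct, χ a in all three
      have hx1 : χ a ∈ a := (mem_inter.1 (hχmem a ha)).2
      have hx3 : χ a ∈ σ (σ a) := by rw [← hχσ a ha]; exact hc3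
      have h3 := hR3 a ha (σ a) hb1 (σ (σ a)) hc1
        (Ne.symm hb2) (fun h => hne' h.symm) (Ne.symm hc2)
      have : χ a ∈ a ∩ σ a ∩ σ (σ a) :=
        mem_inter.2 ⟨mem_inter.2 ⟨hx1, hb3⟩, hx3⟩
      rw [h3] at this
      exact absurd this (notMem_empty _)
    have hev : Even R.card :=
      even_card_of_invol R.card R rfl σ
        (fun a ha => (hσspec a ha).1) (fun a ha => (hσspec a ha).2.1) hinv
    obtain ⟨k, hk⟩ := heven
    obtain ⟨m, hm⟩ := hev
    omega
  have hLcard : L.card = r + 1 := by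
    rw [Subset.antisymm hLR hRL, hRcard]
  -- lower bound
  have hlow : ∀ T : Finset P, IsTransversal L T → r + 2 ≤ 2 * T.card := by
    intro T hT
    have hRne : R.Nonempty := by rw [← card_pos, hRcard]; omega
    obtain ⟨a0, ha0⟩ := hRne
    have ha0pos : a0.Nonempty := by
      rw [← card_pos, hunif a0 (hRL ha0)]; omega
    obtain ⟨p0, hp0⟩ := ha0pos
    set g : Finset P → P := fun ℓ => if h : (T ∩ ℓ).Nonempty then h.choose else p0 with hg
    have hmaps : ∀ ℓ ∈ L, g ℓ ∈ T ∧ g ℓ ∈ ℓ := by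
      intro ℓ hℓ
      have h := hT ℓ hℓ
      simp only [hg, dif_pos h]
      exact mem_inter.1 h.choose_spec
    have hfib : ∀ p ∈ T, (L.filter fun ℓ => g ℓ = p).card ≤ 2 := by
      intro p hp
      by_contra h
      push_neg at h
      obtain ⟨a, ha, b, hb, c, hc, hab, hac, hbc⟩ := (two_lt_card (s := L.filter fun ℓ => g ℓ = p)).1 (by omega)
      rw [mem_filter] at ha hb hc
      have hpa : p ∈ a := ha.2 ▸ (hmaps a ha.1).2
      have hpb : p ∈ b := hb.2 ▸ (hmaps b hb.1).2
      have hpc : p ∈ c := hc.2 ▸ (hmaps c hc.1).2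
      have h3 := hR3 a (hLR ha.1) b (hLR hb.1) c (hLR hc.1) hab hac hbc
      have : p ∈ a ∩ b ∩ c := mem_inter.2 ⟨mem_inter.2 ⟨hpa, hpb⟩, hpc⟩
      rw [h3] at this
      exact absurd this (notMem_empty _)
    have hcount : L.card ≤ 2 * T.card :=
      card_le_mul_card_image_of_maps_to (fun ℓ hℓ => (hmaps ℓ hℓ).1) 2 hfib
    rw [hLcard] at hcount
    obtain ⟨k, hk⟩ := heven
    omega
  -- upper bound
  obtain ⟨T, hTtr, hTc⟩ := exists_small_transversal L.card L rfl hint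
  rw [hLcard] at hTc
  -- conclude
  have hτmem : tau L ∈ {n | ∃ T : Finset P, T.card = n ∧ IsTransversal L T} :=
    Nat.sInf_mem ⟨T.card, T, rfl, hTtr⟩
  obtain ⟨T', hT'c, hT'tr⟩ := hτmem
  have h1 : tau L ≤ T.card := Nat.sInf_le ⟨T, rfl, hTtr⟩
  have h2 := hlow T' hT'tr
  obtain ⟨k, hk⟩ := heven
  omega
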